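/- arXiv:0910.2830 — 2 statements merged into one kernel-verified Lean document; each statement's English description precedes it below -/
import Mathlib

section
/- Consider the incidence structure with: points the fifteen lines of F₁₅; lines of type (i) the five lines of F₅; lines of type (ii) the ten lines of F₁₀ = {(ℓ + m)^⊥ : ℓ, m distinct elements of F₅}; where a point P is incident with a line ℓ of type (i) if and only if P ∩ ℓ^⊥ = 0, and incident with a line ℓ of type (ii) if and only if P ⊆ ℓ^⊥. Then this incidence structure is a generalized quadrangle of order (2,2): every line is incident with exactly 3 points, every point is incident with exactly 3 lines, two distinct points are incident with at most one common line, and for every non-incident point–line pair (P, L) there is exactly one point Q incident with L such that P and Q are incident with a common line. (Hence it is isomorphic to the generalized quadrangle W(2).) -/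
open Matrix

abbrev F3 := ZMod 3
abbrev V6 := Fin 6 → F3

/-- The line (2-dim subspace) represented by a 2×6 matrix: the span of its rows. -/
def lineOf (A : Matrix (Fin 2) (Fin 6) F3) : Submodule F3 V6 :=
  Submodule.span F3 (Set.range A)

/-- The perp of a subspace `W` with respect to a 6×6 Gram matrix `M`:
`{x | xᵀ M w = 0 for all w ∈ W}`. -/
def perp (M : Matrix (Fin 6) (Fin 6) F3) (W : Submodule F3 V6) : Submodule F3 V6 where
  carrier := {x | ∀ w ∈ W, x ⬝ᵥ M.mulVec w = 0}
  add_mem' := by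
    intro a b ha hb w hw
    simp only [Set.mem_setOf_eq] at *
    rw [add_dotProduct, ha w hw, hb w hw, add_zero]
  zero_mem' := by
    intro w hw
    exact zero_dotProduct _
  smul_mem' := by
    intro c x hx w hw
    simp only [Set.mem_setOf_eq] at *
    rw [smul_dotProduct, hx w hw, smul_zero]

/-- A 2×6 matrix built from three 2×2 blocks. -/
def blk3 (A B C : Matrix (Fin 2) (Fin 2) F3) : Matrix (Fin 2) (Fin 6) F3 :=
  Matrix.of fun i j => ![A, B, C] ⟨(j : ℕ) / 2, by omega⟩ i ⟨(j : ℕ) % 2, by omega⟩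

/-- A 6×6 matrix built from nine 2×2 blocks. -/
def blk33 (M : Matrix (Fin 3) (Fin 3) (Matrix (Fin 2) (Fin 2) F3)) :
    Matrix (Fin 6) (Fin 6) F3 :=
  Matrix.of fun i j =>
    M ⟨(i : ℕ) / 2, by omega⟩ ⟨(j : ℕ) / 2, by omega⟩ ⟨(i : ℕ) % 2, by omega⟩ ⟨(j : ℕ) % 2, by omega⟩

/-- The 2×2 block of a 6×6 matrix in block-position `(i, j)`. -/
def blkAt (M : Matrix (Fin 6) (Fin 6) F3) (i j : Fin 3) : Matrix (Fin 2) (Fin 2) F3 :=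
  Matrix.of fun a b => M ⟨2 * (i : ℕ) + (a : ℕ), by omega⟩ ⟨2 * (j : ℕ) + (b : ℕ), by omega⟩

/-- Two (not necessarily distinct) lines are opposite w.r.t. `M` if `ℓ ∩ m^⊥ = 0`. -/
def Opp (M : Matrix (Fin 6) (Fin 6) F3) (ℓ m : Submodule F3 V6) : Prop :=
  ℓ ⊓ perp M m = ⊥

/-- The set `F5` of five lines: `F4` together with the line of `(I R S)` where
`R = [[2,0],[2,2]]` and `S = [[2,2],[0,2]]`. -/
def F5 : Set (Submodule F3 V6) :=
  {lineOf (blk3 1 0 0), lineOf (blk3 0 1 0), lineOf (blk3 0 0 1), lineOf (blk3 1 1 1),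
   lineOf (blk3 1 !![2, 0; 2, 2] !![2, 2; 0, 2])}

/-- The six lines `m₁, …, m₆`. -/
def mline : Fin 6 → Submodule F3 V6 :=
  ![lineOf !![1, 0, 1, 2, 2, 0; 0, 1, 1, 0, 2, 2],
    lineOf !![1, 0, 1, 2, 1, 1; 0, 1, 1, 0, 2, 0],
    lineOf !![1, 0, 0, 2, 0, 1; 0, 1, 1, 1, 2, 1],
    lineOf !![1, 0, 0, 2, 2, 0; 0, 1, 1, 1, 2, 2],
    lineOf !![1, 0, 2, 2, 1, 1; 0, 1, 0, 2, 2, 0],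
    lineOf !![1, 0, 2, 2, 0, 1; 0, 1, 0, 2, 2, 1]]

/-- The Gram matrix `M₆`. -/
def M6 : Matrix (Fin 6) (Fin 6) F3 :=
  !![0, 0, 2, 2, 0, 0;
     0, 0, 0, 0, 1, 1;
     1, 0, 0, 0, 0, 0;
     1, 0, 0, 0, 1, 0;
     0, 2, 0, 2, 0, 0;
     0, 2, 0, 0, 0, 0]

/-- The fifteen lines `F₁₅`. -/
def f15 : Fin 15 → Submodule F3 V6 :=
  ![lineOf !![1, 0, 2, 2, 2, 2; 0, 1, 0, 2, 0, 2],
    lineOf !![1, 0, 0, 0, 0, 1; 0, 1, 0, 0, 2, 1],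
    lineOf !![1, 0, 1, 0, 2, 2; 0, 1, 0, 1, 0, 2],
    lineOf !![0, 0, 1, 0, 1, 2; 0, 0, 0, 1, 1, 0],
    lineOf !![1, 0, 0, 2, 1, 0; 0, 1, 1, 1, 0, 1],
    lineOf !![0, 0, 1, 0, 1, 1; 0, 0, 0, 1, 2, 0],
    lineOf !![1, 0, 2, 0, 0, 0; 0, 1, 2, 2, 0, 0],
    lineOf !![1, 0, 1, 2, 0, 0; 0, 1, 1, 0, 0, 0],
    lineOf !![1, 0, 1, 0, 0, 0; 0, 1, 0, 1, 0, 0],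
    lineOf !![1, 0, 2, 0, 2, 0; 0, 1, 2, 2, 2, 2],
    lineOf !![1, 0, 0, 0, 1, 0; 0, 1, 0, 0, 0, 1],
    lineOf !![0, 0, 1, 0, 1, 0; 0, 0, 0, 1, 0, 1],
    lineOf !![1, 0, 0, 0, 2, 2; 0, 1, 0, 0, 0, 2],
    lineOf !![1, 0, 2, 0, 1, 0; 0, 1, 2, 2, 0, 1],
    lineOf !![1, 0, 1, 0, 1, 1; 0, 1, 0, 1, 2, 0]]

/-- The set `F₁₅` of fifteen lines (the point set of the geometry). -/
def F15 : Set (Submodule F3 V6) := Set.range f15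

/-- `F₁₀`: the perps of the spans of the ten pairs of distinct elements of `F₅`. -/
def F10 : Set (Submodule F3 V6) :=
  {W | ∃ ℓ ∈ F5, ∃ m ∈ F5, ℓ ≠ m ∧ W = perp M6 (ℓ ⊔ m)}

/-- Points of the incidence structure: the elements of `F₁₅`. -/
def Pt : Type := {x : Submodule F3 V6 // x ∈ F15}

/-- Lines of the incidence structure: type (i) the elements of `F₅`,
type (ii) the elements of `F₁₀`. -/
def Ln : Type := {x : Submodule F3 V6 // x ∈ F5} ⊕ {x : Submodule F3 V6 // x ∈ F10}

/-- Incidence: a point `P` is incident with a line `ℓ` of type (i) iff `P ∩ ℓ^⊥ = 0`,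
and with a line `ℓ` of type (ii) iff `P ⊆ ℓ^⊥`. -/
def inc (P : Pt) (L : Ln) : Prop :=
  match L with
  | .inl ℓ => P.1 ⊓ perp M6 ℓ.1 = ⊥
  | .inr ℓ => P.1 ≤ perp M6 ℓ.1


set_option maxRecDepth 20000

section Aux

def C10m : Fin 10 → Matrix (Fin 2) (Fin 6) F3 :=
  ![!![0, 1, 0, 0, 0, 0; 0, 0, 1, 2, 0, 0],
    !![1, 0, 0, 0, 0, 0; 0, 0, 0, 0, 1, 2],
    !![1, 0, 2, 1, 2, 1; 0, 1, 1, 2, 1, 2],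
    !![1, 0, 2, 1, 1, 2; 0, 1, 2, 1, 1, 2],
    !![0, 0, 1, 0, 0, 0; 0, 0, 0, 0, 0, 1],
    !![0, 1, 0, 1, 0, 1; 0, 0, 1, 1, 0, 0],
    !![0, 1, 2, 0, 0, 2; 0, 0, 0, 1, 0, 0],
    !![1, 0, 1, 0, 0, 2; 0, 0, 0, 0, 1, 1],
    !![1, 0, 2, 0, 0, 2; 0, 0, 0, 0, 1, 0],
    !![1, 0, 2, 1, 0, 2; 0, 1, 2, 0, 1, 2]]

def A15 : Fin 15 → Matrix (Fin 2) (Fin 6) F3 :=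
  ![!![1, 0, 2, 2, 2, 2; 0, 1, 0, 2, 0, 2],
    !![1, 0, 0, 0, 0, 1; 0, 1, 0, 0, 2, 1],
    !![1, 0, 1, 0, 2, 2; 0, 1, 0, 1, 0, 2],
    !![0, 0, 1, 0, 1, 2; 0, 0, 0, 1, 1, 0],
    !![1, 0, 0, 2, 1, 0; 0, 1, 1, 1, 0, 1],
    !![0, 0, 1, 0, 1, 1; 0, 0, 0, 1, 2, 0],
    !![1, 0, 2, 0, 0, 0; 0, 1, 2, 2, 0, 0],
    !![1, 0, 1, 2, 0, 0; 0, 1, 1, 0, 0, 0],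
    !![1, 0, 1, 0, 0, 0; 0, 1, 0, 1, 0, 0],
    !![1, 0, 2, 0, 2, 0; 0, 1, 2, 2, 2, 2],
    !![1, 0, 0, 0, 1, 0; 0, 1, 0, 0, 0, 1],
    !![0, 0, 1, 0, 1, 0; 0, 0, 0, 1, 0, 1],
    !![1, 0, 0, 0, 2, 2; 0, 1, 0, 0, 0, 2],
    !![1, 0, 2, 0, 1, 0; 0, 1, 2, 2, 0, 1],
    !![1, 0, 1, 0, 1, 1; 0, 1, 0, 1, 2, 0]]

def pr1 : Fin 10 → Fin 5 := ![0, 0, 0, 0, 1, 1, 1, 2, 2, 3]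

def pr2 : Fin 10 → Fin 5 := ![1, 2, 3, 4, 2, 3, 4, 3, 4, 4]

def piv1 : Fin 10 → Fin 6 := ![1, 0, 0, 0, 2, 1, 1, 0, 0, 0]

def piv2 : Fin 10 → Fin 6 := ![2, 4, 1, 1, 5, 2, 3, 4, 4, 1]

def NinvM : Fin 10 → Matrix (Fin 6) (Fin 6) F3 :=
  ![!![0, 0, 2, 0, 0, 0; 0, 0, 0, 0, 1, 0; 0, 0, 0, 0, 0, 1; 1, 0, 0, 0, 0, 2; 0, 0, 1, 2, 0, 0; 0, 2, 2, 1, 0, 0],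
    !![0, 0, 0, 0, 1, 0; 0, 0, 0, 1, 0, 0; 1, 0, 2, 1, 0, 0; 0, 0, 1, 2, 0, 0; 0, 0, 0, 0, 0, 1; 0, 2, 0, 0, 0, 2],
    !![0, 0, 0, 0, 1, 0; 0, 0, 0, 0, 0, 1; 2, 0, 2, 0, 2, 1; 2, 0, 1, 0, 1, 2; 0, 1, 0, 2, 2, 1; 0, 1, 0, 1, 1, 2],
    !![0, 0, 0, 0, 1, 0; 0, 0, 0, 0, 0, 1; 0, 0, 1, 0, 2, 2; 1, 0, 2, 0, 1, 1; 0, 2, 0, 1, 1, 1; 0, 0, 0, 2, 2, 2],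
    !![2, 0, 0, 0, 0, 0; 0, 0, 0, 1, 0, 0; 0, 0, 0, 0, 1, 0; 0, 0, 1, 2, 0, 0; 1, 2, 0, 0, 0, 0; 0, 0, 0, 0, 0, 1],
    !![2, 0, 0, 0, 0, 0; 0, 0, 0, 0, 1, 0; 0, 0, 0, 0, 0, 1; 1, 0, 2, 0, 1, 1; 1, 2, 0, 0, 0, 0; 2, 2, 0, 2, 1, 0],
    !![2, 0, 0, 0, 0, 0; 0, 0, 0, 0, 1, 0; 1, 0, 1, 0, 2, 0; 0, 0, 0, 0, 0, 1; 1, 2, 0, 0, 0, 0; 1, 0, 0, 2, 2, 0],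
    !![0, 0, 0, 0, 1, 0; 0, 1, 0, 0, 0, 0; 1, 1, 1, 0, 1, 0; 1, 2, 0, 0, 0, 0; 0, 0, 0, 0, 0, 1; 0, 1, 0, 2, 2, 1],
    !![0, 0, 0, 0, 1, 0; 0, 1, 0, 0, 0, 0; 0, 2, 1, 0, 2, 0; 1, 2, 0, 0, 0, 0; 0, 0, 0, 0, 0, 1; 0, 2, 0, 2, 2, 0],
    !![0, 0, 0, 0, 1, 0; 0, 0, 0, 0, 0, 1; 0, 0, 1, 0, 2, 2; 2, 0, 1, 0, 1, 0; 0, 1, 0, 2, 0, 1; 0, 0, 0, 2, 2, 2]]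

def incB : Fin 15 → Fin 15 → Bool :=
  ![![false, false, true, false, false, false, false, true, false, false, false, true, false, false, false],
    ![false, true, false, false, false, false, true, false, false, false, false, false, false, false, true],
    ![true, false, false, false, false, false, false, false, false, false, false, true, true, false, false],
    ![true, false, false, false, false, false, false, false, false, true, false, false, false, false, true],
    ![false, false, true, false, false, false, false, false, true, false, true, false, false, false, false],
    ![false, false, false, true, false, false, false, false, true, true, false, false, false, false, false],
    ![false, false, false, true, false, true, false, false, false, false, false, false, false, true, false],
    ![false, false, true, false, false, true, false, false, false, false, false, false, false, false, true],
    ![false, false, false, false, true, true, false, false, false, false, false, false, true, false, false],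
    ![false, true, false, false, false, false, false, true, false, false, false, false, false, true, false],
    ![false, false, false, false, true, false, true, false, false, false, true, false, false, false, false],
    ![false, false, false, false, true, false, false, true, false, true, false, false, false, false, false],
    ![false, false, false, true, false, false, true, false, false, false, false, true, false, false, false],
    ![true, false, false, false, false, false, false, false, false, false, true, false, false, true, false],
    ![false, true, false, false, false, false, false, false, true, false, false, false, true, false, false]]

/-- membership in a line -/
lemma mem_lineOf {A : Matrix (Fin 2) (Fin 6) F3} {x : V6} :
    x ∈ lineOf A ↔ ∃ a b : F3, a • A 0 + b • A 1 = x := by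
  rw [lineOf]
  erw [Submodule.mem_span_range_iff_exists_fun]
  constructor
  · rintro ⟨c, h⟩
    exact ⟨c 0, c 1, by simpa [Fin.sum_univ_two] using h⟩
  · rintro ⟨a, b, h⟩
    exact ⟨![a, b], by simpa [Fin.sum_univ_two] using h⟩

lemma mem_perp {M : Matrix (Fin 6) (Fin 6) F3} {W : Submodule F3 V6} {x : V6} :
    x ∈ perp M W ↔ ∀ w ∈ W, x ⬝ᵥ M.mulVec w = 0 := Iff.rfl

lemma mem_perp_span {M : Matrix (Fin 6) (Fin 6) F3} {s : Set V6} {x : V6} :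
    x ∈ perp M (Submodule.span F3 s) ↔ ∀ v ∈ s, x ⬝ᵥ M.mulVec v = 0 := by
  rw [mem_perp]
  constructor
  · intro h v hv
    exact h v (Submodule.subset_span hv)
  · intro h w hw
    induction hw using Submodule.span_induction with
    | mem v hv => exact h v hv
    | zero => rw [Matrix.mulVec_zero, dotProduct_zero]
    | add u v _ _ hu hv => rw [Matrix.mulVec_add, dotProduct_add, hu, hv, add_zero]
    | smul c u _ hu => rw [Matrix.mulVec_smul, dotProduct_smul, hu, smul_zero]

lemma mem_perp_lineOf {M : Matrix (Fin 6) (Fin 6) F3} {A : Matrix (Fin 2) (Fin 6) F3} {x : V6} :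
    x ∈ perp M (lineOf A) ↔ (x ⬝ᵥ M.mulVec (A 0) = 0 ∧ x ⬝ᵥ M.mulVec (A 1) = 0) := by
  rw [lineOf, mem_perp_span]
  constructor
  · intro h
    exact ⟨h _ ⟨0, rfl⟩, h _ ⟨1, rfl⟩⟩
  · rintro ⟨h0, h1⟩ v ⟨i, rfl⟩
    fin_cases i <;> assumption

lemma mem_perp_sup {M : Matrix (Fin 6) (Fin 6) F3} {P Q : Submodule F3 V6} {x : V6} :
    x ∈ perp M (P ⊔ Q) ↔ x ∈ perp M P ∧ x ∈ perp M Q := by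
  simp only [mem_perp]
  constructor
  · intro h
    exact ⟨fun w hw => h w (Submodule.mem_sup_left hw),
      fun w hw => h w (Submodule.mem_sup_right hw)⟩
  · rintro ⟨h1, h2⟩ w hw
    obtain ⟨p, hp, q, hq, rfl⟩ := Submodule.mem_sup.mp hw
    rw [Matrix.mulVec_add, dotProduct_add, h1 p hp, h2 q hq, add_zero]

lemma mem_perp_pair {M : Matrix (Fin 6) (Fin 6) F3} {A B : Matrix (Fin 2) (Fin 6) F3} {x : V6} :
    x ∈ perp M (lineOf A ⊔ lineOf B) ↔
      (x ⬝ᵥ M.mulVec (A 0) = 0 ∧ x ⬝ᵥ M.mulVec (A 1) = 0) ∧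
      (x ⬝ᵥ M.mulVec (B 0) = 0 ∧ x ⬝ᵥ M.mulVec (B 1) = 0) := by
  rw [mem_perp_sup, mem_perp_lineOf, mem_perp_lineOf]

lemma self_mem_lineOf (A : Matrix (Fin 2) (Fin 6) F3) (i : Fin 2) : A i ∈ lineOf A :=
  Submodule.subset_span ⟨i, rfl⟩

lemma lineOf_le_iff {A : Matrix (Fin 2) (Fin 6) F3} {W : Submodule F3 V6} :
    lineOf A ≤ W ↔ A 0 ∈ W ∧ A 1 ∈ W := by
  constructor
  · intro h
    exact ⟨h (self_mem_lineOf A 0), h (self_mem_lineOf A 1)⟩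
  · rintro ⟨h0, h1⟩
    rw [lineOf, Submodule.span_le]
    rintro x ⟨i, rfl⟩
    fin_cases i <;> assumption

/-- decidable criterion for equality of lines -/
def sameLine (A B : Matrix (Fin 2) (Fin 6) F3) : Prop :=
  (∃ a b : F3, a • B 0 + b • B 1 = A 0) ∧ (∃ a b : F3, a • B 0 + b • B 1 = A 1) ∧
  (∃ a b : F3, a • A 0 + b • A 1 = B 0) ∧ (∃ a b : F3, a • A 0 + b • A 1 = B 1)

instance (A B : Matrix (Fin 2) (Fin 6) F3) : Decidable (sameLine A B) := by
  unfold sameLine; infer_instance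

lemma lineOf_eq_iff {A B : Matrix (Fin 2) (Fin 6) F3} :
    lineOf A = lineOf B ↔ sameLine A B := by
  constructor
  · intro h
    refine ⟨?_, ?_, ?_, ?_⟩
    · exact mem_lineOf.mp (h ▸ self_mem_lineOf A 0)
    · exact mem_lineOf.mp (h ▸ self_mem_lineOf A 1)
    · exact mem_lineOf.mp (h ▸ self_mem_lineOf B 0)
    · exact mem_lineOf.mp (h ▸ self_mem_lineOf B 1)
  · rintro ⟨h0, h1, h2, h3⟩
    apply le_antisymm
    · exact lineOf_le_iff.mpr ⟨mem_lineOf.mpr h0, mem_lineOf.mpr h1⟩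
    · exact lineOf_le_iff.mpr ⟨mem_lineOf.mpr h2, mem_lineOf.mpr h3⟩

lemma lineOf_ne {A B : Matrix (Fin 2) (Fin 6) F3} (h : ¬ sameLine A B) :
    lineOf A ≠ lineOf B := fun he => h (lineOf_eq_iff.mp he)

/-- decidable criteria for incidence -/
def D1 (A B : Matrix (Fin 2) (Fin 6) F3) : Prop :=
  ∀ a b : F3, (a • A 0 + b • A 1) ⬝ᵥ M6.mulVec (B 0) = 0 →
    (a • A 0 + b • A 1) ⬝ᵥ M6.mulVec (B 1) = 0 → a • A 0 + b • A 1 = 0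

def D2 (A B : Matrix (Fin 2) (Fin 6) F3) : Prop :=
  (A 0 ⬝ᵥ M6.mulVec (B 0) = 0 ∧ A 0 ⬝ᵥ M6.mulVec (B 1) = 0) ∧
  (A 1 ⬝ᵥ M6.mulVec (B 0) = 0 ∧ A 1 ⬝ᵥ M6.mulVec (B 1) = 0)

instance (A B : Matrix (Fin 2) (Fin 6) F3) : Decidable (D1 A B) := by
  unfold D1; infer_instance

instance (A B : Matrix (Fin 2) (Fin 6) F3) : Decidable (D2 A B) := by
  unfold D2; infer_instance

lemma incl_iff (A B : Matrix (Fin 2) (Fin 6) F3) :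
    (lineOf A ⊓ perp M6 (lineOf B) = ⊥) ↔ D1 A B := by
  rw [Submodule.eq_bot_iff]
  constructor
  · intro h a b h1 h2
    exact h _ (Submodule.mem_inf.mpr ⟨mem_lineOf.mpr ⟨a, b, rfl⟩,
      mem_perp_lineOf.mpr ⟨h1, h2⟩⟩)
  · intro h x hx
    obtain ⟨hx1, hx2⟩ := Submodule.mem_inf.mp hx
    obtain ⟨a, b, rfl⟩ := mem_lineOf.mp hx1
    obtain ⟨h1, h2⟩ := mem_perp_lineOf.mp hx2
    exact h a b h1 h2

lemma le_perp_iff (A B : Matrix (Fin 2) (Fin 6) F3) :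
    (lineOf A ≤ perp M6 (lineOf B)) ↔ D2 A B :=
  lineOf_le_iff.trans (and_congr mem_perp_lineOf mem_perp_lineOf)

/-- the matrices of the five lines of F5 -/
def B5m : Fin 5 → Matrix (Fin 2) (Fin 6) F3 :=
  ![blk3 1 0 0, blk3 0 1 0, blk3 0 0 1, blk3 1 1 1, blk3 1 !![2, 0; 2, 2] !![2, 2; 0, 2]]

lemma mem5 (a : Fin 5) : lineOf (B5m a) ∈ F5 := by
  fin_cases a
  · exact Or.inl rfl
  · exact Or.inr (Or.inl rfl)
  · exact Or.inr (Or.inr (Or.inl rfl))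
  · exact Or.inr (Or.inr (Or.inr (Or.inl rfl)))
  · exact Or.inr (Or.inr (Or.inr (Or.inr rfl)))

lemma F5_idx : ∀ x ∈ F5, ∃ a : Fin 5, x = lineOf (B5m a) := by
  intro x hx
  rcases hx with h | h | h | h | h
  exacts [⟨0, h⟩, ⟨1, h⟩, ⟨2, h⟩, ⟨3, h⟩, ⟨4, h⟩]

lemma B5m_ne : ∀ k : Fin 10, lineOf (B5m (pr1 k)) ≠ lineOf (B5m (pr2 k)) := by
  intro k
  apply lineOf_ne
  revert k
  decide

lemma mem10 (k : Fin 10) :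
    perp M6 (lineOf (B5m (pr1 k)) ⊔ lineOf (B5m (pr2 k))) ∈ F10 :=
  ⟨_, mem5 (pr1 k), _, mem5 (pr2 k), B5m_ne k, rfl⟩

/-- the system matrix: the four perp conditions plus two coordinates -/
def Nmat (A B : Matrix (Fin 2) (Fin 6) F3) (p0 p1 : Fin 6) : Matrix (Fin 6) (Fin 6) F3 :=
  Matrix.of ![M6.mulVec (A 0), M6.mulVec (A 1), M6.mulVec (B 0), M6.mulVec (B 1),
    Pi.single p0 1, Pi.single p1 1]

lemma perp_pair_eq_line (A B C : Matrix (Fin 2) (Fin 6) F3) (p0 p1 : Fin 6)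
    (Ninv : Matrix (Fin 6) (Fin 6) F3)
    (hC0 : C 0 ∈ perp M6 (lineOf A ⊔ lineOf B))
    (hC1 : C 1 ∈ perp M6 (lineOf A ⊔ lineOf B))
    (hp : C 0 p0 = 1 ∧ C 0 p1 = 0 ∧ C 1 p0 = 0 ∧ C 1 p1 = 1)
    (hinv : Ninv * Nmat A B p0 p1 = 1) :
    perp M6 (lineOf A ⊔ lineOf B) = lineOf C := by
  apply le_antisymm
  · intro x hx
    set u : V6 := x - x p0 • C 0 - x p1 • C 1 with hu
    have humem : u ∈ perp M6 (lineOf A ⊔ lineOf B) :=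
      Submodule.sub_mem _ (Submodule.sub_mem _ hx (Submodule.smul_mem _ _ hC0))
        (Submodule.smul_mem _ _ hC1)
    have hcond := mem_perp_pair.mp humem
    have hup0 : u p0 = 0 := by
      simp only [hu, Pi.sub_apply, Pi.smul_apply, smul_eq_mul, hp.1, hp.2.2.1]
      ring
    have hup1 : u p1 = 0 := by
      simp only [hu, Pi.sub_apply, Pi.smul_apply, smul_eq_mul, hp.2.1, hp.2.2.2]
      ring
    have hN : (Nmat A B p0 p1).mulVec u = 0 := by
      funext j
      fin_cases j
      · show M6.mulVec (A 0) ⬝ᵥ u = 0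
        rw [dotProduct_comm]; exact hcond.1.1
      · show M6.mulVec (A 1) ⬝ᵥ u = 0
        rw [dotProduct_comm]; exact hcond.1.2
      · show M6.mulVec (B 0) ⬝ᵥ u = 0
        rw [dotProduct_comm]; exact hcond.2.1
      · show M6.mulVec (B 1) ⬝ᵥ u = 0
        rw [dotProduct_comm]; exact hcond.2.2
      · show Pi.single p0 (1 : F3) ⬝ᵥ u = 0
        rw [single_dotProduct, one_mul, hup0]
      · show Pi.single p1 (1 : F3) ⬝ᵥ u = 0
        rw [single_dotProduct, one_mul, hup1]
    have hu0 : u = 0 := by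
      have h2 : Ninv.mulVec ((Nmat A B p0 p1).mulVec u) = Ninv.mulVec 0 := by rw [hN]
      rwa [Matrix.mulVec_mulVec, hinv, Matrix.one_mulVec, Matrix.mulVec_zero] at h2
    refine mem_lineOf.mpr ⟨x p0, x p1, ?_⟩
    have : x - (x p0 • C 0 + x p1 • C 1) = 0 := by rw [← sub_sub]; exact hu0
    exact (sub_eq_zero.mp this).symm
  · exact lineOf_le_iff.mpr ⟨hC0, hC1⟩

lemma perp_pair_eq (k : Fin 10) :
    perp M6 (lineOf (B5m (pr1 k)) ⊔ lineOf (B5m (pr2 k))) = lineOf (C10m k) := by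
  apply perp_pair_eq_line _ _ _ (piv1 k) (piv2 k) (NinvM k)
  · apply mem_perp_pair.mpr
    revert k; decide
  · apply mem_perp_pair.mpr
    revert k; decide
  · revert k; decide
  · revert k; decide

/-- the point and line enumerations -/
def pt (i : Fin 15) : Pt := ⟨f15 i, ⟨i, rfl⟩⟩

def ln1 (a : Fin 5) : Ln := Sum.inl ⟨lineOf (B5m a), mem5 a⟩

def ln2 (k : Fin 10) : Ln :=
  Sum.inr ⟨perp M6 (lineOf (B5m (pr1 k)) ⊔ lineOf (B5m (pr2 k))), mem10 k⟩

def lval (j : Fin 15) : Ln :=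
  if h : (j : ℕ) < 5 then ln1 ⟨(j : ℕ), h⟩ else ln2 ⟨(j : ℕ) - 5, by omega⟩

lemma lval_lt {j : Fin 15} (h : (j : ℕ) < 5) : lval j = ln1 ⟨(j : ℕ), h⟩ := dif_pos h

lemma lval_ge {j : Fin 15} (h : ¬ (j : ℕ) < 5) :
    lval j = ln2 ⟨(j : ℕ) - 5, by omega⟩ := dif_neg h

lemma f15_eq (i : Fin 15) : f15 i = lineOf (A15 i) := by
  fin_cases i <;> rfl

lemma A15_inj : ∀ i j : Fin 15, sameLine (A15 i) (A15 j) → i = j := by decide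

lemma f15_inj : Function.Injective f15 := by
  intro i j h
  refine A15_inj i j (lineOf_eq_iff.mp ?_)
  rw [← f15_eq, ← f15_eq, h]

lemma pt_inj : Function.Injective pt := fun i j h =>
  f15_inj (congrArg Subtype.val h)

lemma pt_surj : Function.Surjective pt := by
  rintro ⟨x, i, rfl⟩
  exact ⟨i, rfl⟩

lemma B5m_inj : ∀ a b : Fin 5, sameLine (B5m a) (B5m b) → a = b := by decide

lemma C10m_inj : ∀ k k' : Fin 10, sameLine (C10m k) (C10m k') → k = k' := by decide

def lnVal : Ln → Submodule F3 V6 := Sum.elim Subtype.val Subtype.val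

lemma lval_inj : Function.Injective lval := by
  intro j1 j2 h
  by_cases h1 : (j1 : ℕ) < 5 <;> by_cases h2 : (j2 : ℕ) < 5
  · rw [lval_lt h1, lval_lt h2] at h
    have h' : lineOf (B5m ⟨(j1 : ℕ), h1⟩) = lineOf (B5m ⟨(j2 : ℕ), h2⟩) :=
      congrArg lnVal h
    have := congrArg Fin.val (B5m_inj _ _ (lineOf_eq_iff.mp h'))
    exact Fin.ext (by simpa using this)
  · rw [lval_lt h1, lval_ge h2] at h
    exact absurd h (by simp [ln1, ln2])
  · rw [lval_ge h1, lval_lt h2] at h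
    exact absurd h (by simp [ln1, ln2])
  · rw [lval_ge h1, lval_ge h2] at h
    have h' := congrArg lnVal h
    simp only [lnVal, ln2, Sum.elim_inr] at h'
    rw [perp_pair_eq, perp_pair_eq] at h'
    have := congrArg Fin.val (C10m_inj _ _ (lineOf_eq_iff.mp h'))
    simp only at this
    exact Fin.ext (by omega)

lemma pairs_idx : ∀ a b : Fin 5, a ≠ b →
    ∃ k : Fin 10, (pr1 k = a ∧ pr2 k = b) ∨ (pr1 k = b ∧ pr2 k = a) := by decide

lemma lval_surj : Function.Surjective lval := by
  rintro (⟨x, hx⟩ | ⟨x, hx⟩)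
  · obtain ⟨a, rfl⟩ := F5_idx x hx
    refine ⟨⟨(a : ℕ), by omega⟩, ?_⟩
    rw [lval_lt (show ((⟨(a : ℕ), by omega⟩ : Fin 15) : ℕ) < 5 from a.2)]
    rfl
  · obtain ⟨l, hl, m, hm, hne, rfl⟩ := hx
    obtain ⟨a, rfl⟩ := F5_idx l hl
    obtain ⟨b, rfl⟩ := F5_idx m hm
    have hab : a ≠ b := fun h => hne (by rw [h])
    obtain ⟨k, hk | hk⟩ := pairs_idx a b hab
    · refine ⟨⟨(k : ℕ) + 5, by omega⟩, ?_⟩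
      rw [lval_ge (by simp)]
      unfold ln2
      apply congrArg Sum.inr
      apply Subtype.ext
      show perp M6 _ = perp M6 _
      have hidx : (⟨((⟨(k : ℕ) + 5, by omega⟩ : Fin 15) : ℕ) - 5, by omega⟩ : Fin 10) = k :=
        Fin.ext (by simp)
      rw [hidx, hk.1, hk.2]
    · refine ⟨⟨(k : ℕ) + 5, by omega⟩, ?_⟩
      rw [lval_ge (by simp)]
      unfold ln2
      apply congrArg Sum.inr
      apply Subtype.ext
      show perp M6 _ = perp M6 _
      have hidx : (⟨((⟨(k : ℕ) + 5, by omega⟩ : Fin 15) : ℕ) - 5, by omega⟩ : Fin 10) = k :=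
        Fin.ext (by simp)
      rw [hidx, hk.1, hk.2, sup_comm]

/-- the incidence bridge -/
lemma inc_pt_ln1 (i : Fin 15) (a : Fin 5) :
    inc (pt i) (ln1 a) ↔ D1 (A15 i) (B5m a) := by
  have h : inc (pt i) (ln1 a) ↔ (f15 i ⊓ perp M6 (lineOf (B5m a)) = ⊥) := Iff.rfl
  rw [h, f15_eq, incl_iff]

lemma inc_pt_ln2 (i : Fin 15) (k : Fin 10) :
    inc (pt i) (ln2 k) ↔ D2 (A15 i) (C10m k) := by
  have h : inc (pt i) (ln2 k) ↔
      (f15 i ≤ perp M6 (perp M6 (lineOf (B5m (pr1 k)) ⊔ lineOf (B5m (pr2 k))))) := Iff.rfl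
  rw [h, perp_pair_eq, f15_eq, le_perp_iff]

lemma key1 : ∀ (i : Fin 15) (a : Fin 5) (_ : (a : ℕ) < 15),
    (D1 (A15 i) (B5m a) ↔ incB i ⟨(a : ℕ), by omega⟩ = true) := by decide

lemma key2 : ∀ (i : Fin 15) (k : Fin 10) (_ : (k : ℕ) + 5 < 15),
    (D2 (A15 i) (C10m k) ↔ incB i ⟨(k : ℕ) + 5, by omega⟩ = true) := by decide

lemma inc_iff (i j : Fin 15) : inc (pt i) (lval j) ↔ incB i j = true := by
  by_cases h : (j : ℕ) < 5
  · rw [lval_lt h, inc_pt_ln1]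
    have := key1 i ⟨(j : ℕ), h⟩ (by omega)
    have hj : (⟨((⟨(j : ℕ), h⟩ : Fin 5) : ℕ), by omega⟩ : Fin 15) = j := Fin.ext rfl
    rwa [hj] at this
  · rw [lval_ge h, inc_pt_ln2]
    have := key2 i ⟨(j : ℕ) - 5, by omega⟩ (by omega)
    have hj : (⟨((⟨(j : ℕ) - 5, by omega⟩ : Fin 10) : ℕ) + 5, by omega⟩ : Fin 15) = j :=
      Fin.ext (by simp; omega)
    rwa [hj] at this

lemma ncard_setOf (p : Fin 15 → Prop) [DecidablePred p] :
    {i | p i}.ncard = (Finset.univ.filter p).card := by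
  rw [Set.ncard_eq_toFinset_card', Set.toFinset_setOf]

end Aux

/-- The incidence structure with point set `F₁₅` and line set
`F₅ ∪ F₁₀` (with the incidence above) is a generalised quadrangle of order `(2,2)`:
every line has exactly 3 points, every point is on exactly 3 lines, two distinct points
lie on at most one common line, and for every non-incident point–line pair `(P, L)` there
is exactly one point on `L` collinear with `P`. -/
theorem stmt16 :
    (∀ L : Ln, {P : Pt | inc P L}.ncard = 3) ∧
    (∀ P : Pt, {L : Ln | inc P L}.ncard = 3) ∧
    (∀ P Q : Pt, P ≠ Q → {L : Ln | inc P L ∧ inc Q L}.ncard ≤ 1) ∧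
    (∀ (P : Pt) (L : Ln), ¬ inc P L →
      ∃! Q : Pt, inc Q L ∧ ∃ L' : Ln, inc P L' ∧ inc Q L') := by
  constructor
  · -- every line has exactly 3 points
    intro L
    obtain ⟨j, rfl⟩ := lval_surj L
    have himg : {P : Pt | inc P (lval j)} = pt '' {i | incB i j = true} := by
      ext P
      simp only [Set.mem_setOf_eq, Set.mem_image]
      constructor
      · intro h
        obtain ⟨i, rfl⟩ := pt_surj P
        exact ⟨i, (inc_iff i j).mp h, rfl⟩
      · rintro ⟨i, hi, rfl⟩
        exact (inc_iff i j).mpr hi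
    rw [himg, Set.ncard_image_of_injective _ pt_inj, ncard_setOf]
    exact (by decide :
      ∀ j : Fin 15, (Finset.univ.filter (fun i => incB i j = true)).card = 3) j
  constructor
  · -- every point is on exactly 3 lines
    intro P
    obtain ⟨i, rfl⟩ := pt_surj P
    have himg : {L : Ln | inc (pt i) L} = lval '' {j | incB i j = true} := by
      ext L
      simp only [Set.mem_setOf_eq, Set.mem_image]
      constructor
      · intro h
        obtain ⟨j, rfl⟩ := lval_surj L
        exact ⟨j, (inc_iff i j).mp h, rfl⟩
      · rintro ⟨j, hj, rfl⟩
        exact (inc_iff i j).mpr hj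
    rw [himg, Set.ncard_image_of_injective _ lval_inj, ncard_setOf]
    exact (by decide :
      ∀ i : Fin 15, (Finset.univ.filter (fun j => incB i j = true)).card = 3) i
  constructor
  · -- two points on at most one common line
    intro P Q hPQ
    obtain ⟨i, rfl⟩ := pt_surj P
    obtain ⟨i', rfl⟩ := pt_surj Q
    have hne : i ≠ i' := fun h => hPQ (by rw [h])
    have himg : {L : Ln | inc (pt i) L ∧ inc (pt i') L}
        = lval '' {j | incB i j = true ∧ incB i' j = true} := by
      ext L
      simp only [Set.mem_setOf_eq, Set.mem_image]
      constructor
      · rintro ⟨h1, h2⟩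
        obtain ⟨j, rfl⟩ := lval_surj L
        exact ⟨j, ⟨(inc_iff i j).mp h1, (inc_iff i' j).mp h2⟩, rfl⟩
      · rintro ⟨j, ⟨h1, h2⟩, rfl⟩
        exact ⟨(inc_iff i j).mpr h1, (inc_iff i' j).mpr h2⟩
    rw [himg, Set.ncard_image_of_injective _ lval_inj, ncard_setOf]
    exact (by decide : ∀ i i' : Fin 15, i ≠ i' →
      (Finset.univ.filter (fun j => incB i j = true ∧ incB i' j = true)).card ≤ 1) i i' hne
  · -- GQ axiom
    intro P L hPL
    obtain ⟨i, rfl⟩ := pt_surj P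
    obtain ⟨j, rfl⟩ := lval_surj L
    have hB : ¬ incB i j = true := fun h => hPL ((inc_iff i j).mpr h)
    have key4 : ∀ i0 j0 : Fin 15, ¬ incB i0 j0 = true →
        ∃ q : Fin 15, (incB q j0 = true ∧
          ∃ j' : Fin 15, incB i0 j' = true ∧ incB q j' = true) ∧
          ∀ q' : Fin 15, (incB q' j0 = true ∧
            ∃ j' : Fin 15, incB i0 j' = true ∧ incB q' j' = true) → q' = q := by decide
    obtain ⟨q, ⟨hq1, j', hj1, hj2⟩, huniq⟩ := key4 i j hB
    refine ⟨pt q, ⟨(inc_iff q j).mpr hq1,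
      lval j', (inc_iff i j').mpr hj1, (inc_iff q j').mpr hj2⟩, ?_⟩
    rintro Q ⟨hQ1, L', hL1, hL2⟩
    obtain ⟨q', rfl⟩ := pt_surj Q
    obtain ⟨j'', rfl⟩ := lval_surj L'
    have := huniq q' ⟨(inc_iff q' j).mp hQ1, j'', (inc_iff i j'').mp hL1,
      (inc_iff q' j'').mp hL2⟩
    rw [this]
end

section
/- Sylvester's duad–syntheme geometry is a generalized quadrangle of order (2,2): in the incidence structure whose points are the 15 duads of {1,2,3,4,5,6}, whose lines are the 15 synthemes, and where a duad is incident with a syntheme exactly when it is one of its three members, every line is incident with exactly 3 points, every point is incident with exactly 3 lines, two distinct points are incident with at most one common line, and for every non-incident point–line pair (P, L) there is exactly one point Q incident with L such that P and Q are incident with a common line. -/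
set_option maxRecDepth 100000

/-- A duad: an unordered pair of distinct elements of `{1,…,6}` (modelled as a
2-element subset of `Fin 6`). -/
def IsDuad (d : Finset (Fin 6)) : Prop := d.card = 2

/-- A syntheme: a set of three mutually disjoint duads (a perfect matching of the
six-element set). -/
def IsSyntheme (s : Finset (Finset (Fin 6))) : Prop :=
  s.card = 3 ∧ (∀ d ∈ s, IsDuad d) ∧ ∀ d ∈ s, ∀ e ∈ s, d ≠ e → Disjoint d e

def Duads : Finset (Finset (Fin 6)) := Finset.univ.powersetCard 2

def Synthemes : Finset (Finset (Finset (Fin 6))) :=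
  (Duads.powersetCard 3).filter (fun s => ∀ d ∈ s, ∀ e ∈ s, d ≠ e → Disjoint d e)

lemma mem_duads {d : Finset (Fin 6)} : d ∈ Duads ↔ IsDuad d := by
  simp [Duads, Finset.mem_powersetCard, IsDuad, Finset.subset_univ]

lemma mem_synthemes {s : Finset (Finset (Fin 6))} : s ∈ Synthemes ↔ IsSyntheme s := by
  simp only [Synthemes, Finset.mem_filter, Finset.mem_powersetCard, IsSyntheme]
  constructor
  · rintro ⟨⟨hsub, hcard⟩, hdisj⟩
    exact ⟨hcard, fun d hd => mem_duads.mp (hsub hd), hdisj⟩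
  · rintro ⟨hcard, hduad, hdisj⟩
    exact ⟨⟨fun d hd => mem_duads.mpr (hduad d hd), hcard⟩, hdisj⟩

lemma key2_s17 : ∀ d ∈ Duads, (Synthemes.filter (fun s => d ∈ s)).card = 3 := by decide

lemma key3 : ∀ d ∈ Duads, ∀ e ∈ Duads, d ≠ e →
    (Synthemes.filter (fun s => d ∈ s ∧ e ∈ s)).card ≤ 1 := by decide

lemma key4a : ∀ d ∈ Duads, ∀ e ∈ Duads, d ≠ e → Disjoint d e →
    ∃ s ∈ Synthemes, d ∈ s ∧ e ∈ s := by decide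

lemma syntheme_cover {L : Finset (Finset (Fin 6))} (hL : IsSyntheme L) :
    L.biUnion id = Finset.univ := by
  apply Finset.eq_univ_of_card
  rw [Function.id_def, Finset.card_biUnion (fun d hd e he hne => hL.2.2 d hd e he hne)]
  have h : ∀ d ∈ L, d.card = 2 := fun d hd => hL.2.1 d hd
  rw [Finset.sum_congr rfl h, Finset.sum_const, hL.1]
  rfl

lemma key4b {d : Finset (Fin 6)} {L : Finset (Finset (Fin 6))}
    (hd : IsDuad d) (hL : IsSyntheme L) (hdL : d ∉ L) :
    (L.filter (fun e => d ≠ e ∧ Disjoint d e)).card = 1 := by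
  obtain ⟨x, y, hxy, rfl⟩ := Finset.card_eq_two.mp hd
  have hx : x ∈ L.biUnion id := by rw [syntheme_cover hL]; exact Finset.mem_univ x
  have hy : y ∈ L.biUnion id := by rw [syntheme_cover hL]; exact Finset.mem_univ y
  obtain ⟨a, haL, hxa⟩ := Finset.mem_biUnion.mp hx
  obtain ⟨b, hbL, hyb⟩ := Finset.mem_biUnion.mp hy
  have hab : a ≠ b := by
    rintro rfl
    apply hdL
    have hsub : ({x, y} : Finset (Fin 6)) ⊆ a := by
      intro z hz
      rcases Finset.mem_insert.mp hz with rfl | hz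
      · exact hxa
      · exact (Finset.mem_singleton.mp hz) ▸ hyb
    have : ({x, y} : Finset (Fin 6)) = a :=
      Finset.eq_of_subset_of_card_le hsub (by rw [hL.2.1 a haL, hd])
    exact this ▸ haL
  have hcard : (L \ {a, b}).card = 1 := by
    rw [Finset.card_sdiff_of_subset (by
      intro z hz
      rcases Finset.mem_insert.mp hz with rfl | hz
      · exact haL
      · exact (Finset.mem_singleton.mp hz) ▸ hbL), hL.1,
      Finset.card_insert_of_notMem (by simpa using hab), Finset.card_singleton]
  obtain ⟨c, hc⟩ := Finset.card_eq_one.mp hcard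
  have hcL : c ∈ L := (Finset.mem_sdiff.mp (hc ▸ Finset.mem_singleton_self c)).1
  have hcab : c ≠ a ∧ c ≠ b := by
    have := (Finset.mem_sdiff.mp (hc ▸ Finset.mem_singleton_self c)).2
    simp only [Finset.mem_insert, Finset.mem_singleton] at this
    exact ⟨fun h => this (Or.inl h), fun h => this (Or.inr h)⟩
  have key : L.filter (fun e => {x, y} ≠ e ∧ Disjoint {x, y} e) = {c} := by
    ext e
    simp only [Finset.mem_filter, Finset.mem_singleton]
    constructor
    · rintro ⟨heL, _, hdisj⟩
      have hea : e ≠ a := by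
        rintro rfl
        exact (Finset.disjoint_left.mp hdisj (by simp) hxa)
      have heb : e ≠ b := by
        rintro rfl
        exact (Finset.disjoint_left.mp hdisj (by simp) hyb)
      have : e ∈ L \ {a, b} := Finset.mem_sdiff.mpr ⟨heL, by simp [hea, heb]⟩
      rwa [hc, Finset.mem_singleton] at this
    · rintro rfl
      refine ⟨hcL, fun h => hdL (h ▸ hcL), Finset.disjoint_left.mpr ?_⟩
      intro z hz hzc
      rcases Finset.mem_insert.mp hz with rfl | hz
      · exact Finset.disjoint_left.mp
          (hL.2.2 _ hcL a haL hcab.1) hzc hxa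
      · rw [Finset.mem_singleton] at hz; subst hz
        exact Finset.disjoint_left.mp
          (hL.2.2 _ hcL b hbL hcab.2) hzc hyb
  rw [key, Finset.card_singleton]

/-- Sylvester's duad–syntheme geometry is a generalised quadrangle of
order `(2,2)`: each syntheme contains exactly 3 duads, each duad lies in exactly 3
synthemes, two distinct duads lie in at most one common syntheme, and for every
non-incident duad–syntheme pair `(P, L)` there is exactly one duad of `L` collinear
with `P`. -/
theorem stmt17 :
    (∀ L : Finset (Finset (Fin 6)), IsSyntheme L →
      {d : Finset (Fin 6) | IsDuad d ∧ d ∈ L}.ncard = 3) ∧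
    (∀ d : Finset (Fin 6), IsDuad d →
      {s : Finset (Finset (Fin 6)) | IsSyntheme s ∧ d ∈ s}.ncard = 3) ∧
    (∀ d e : Finset (Fin 6), IsDuad d → IsDuad e → d ≠ e →
      {s : Finset (Finset (Fin 6)) | IsSyntheme s ∧ d ∈ s ∧ e ∈ s}.ncard ≤ 1) ∧
    (∀ (d : Finset (Fin 6)) (L : Finset (Finset (Fin 6))),
      IsDuad d → IsSyntheme L → d ∉ L →
      ∃! e : Finset (Fin 6), e ∈ L ∧
        ∃ s : Finset (Finset (Fin 6)), IsSyntheme s ∧ d ∈ s ∧ e ∈ s) := by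
  refine ⟨?_, ?_, ?_, ?_⟩
  · intro L hL
    have h : {d : Finset (Fin 6) | IsDuad d ∧ d ∈ L} = ↑L := by
      ext d; simp only [Set.mem_setOf_eq, Finset.mem_coe]
      exact ⟨fun h => h.2, fun h => ⟨hL.2.1 d h, h⟩⟩
    rw [h, Set.ncard_coe_finset, hL.1]
  · intro d hd
    have h : {s : Finset (Finset (Fin 6)) | IsSyntheme s ∧ d ∈ s}
        = ↑(Synthemes.filter (fun s => d ∈ s)) := by
      ext s; simp [mem_synthemes]
    rw [h, Set.ncard_coe_finset]
    exact key2_s17 d (mem_duads.mpr hd)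
  · intro d e hd he hne
    have h : {s : Finset (Finset (Fin 6)) | IsSyntheme s ∧ d ∈ s ∧ e ∈ s}
        = ↑(Synthemes.filter (fun s => d ∈ s ∧ e ∈ s)) := by
      ext s; simp [mem_synthemes]
    rw [h, Set.ncard_coe_finset]
    exact key3 d (mem_duads.mpr hd) e (mem_duads.mpr he) hne
  · intro d L hd hL hdL
    have h1 := key4b hd hL hdL
    obtain ⟨a, ha⟩ := Finset.card_eq_one.mp h1
    have hmem : ∀ e, (e ∈ L ∧ ∃ s, IsSyntheme s ∧ d ∈ s ∧ e ∈ s) ↔ e = a := by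
      intro e
      rw [← Finset.mem_singleton, ← ha, Finset.mem_filter]
      constructor
      · rintro ⟨heL, s, hs, hds, hes⟩
        have hne : d ≠ e := fun h => hdL (h ▸ heL)
        exact ⟨heL, hne, hs.2.2 d hds e hes hne⟩
      · rintro ⟨heL, hne, hdisj⟩
        obtain ⟨s, hs, hds, hes⟩ := key4a d (mem_duads.mpr hd) e
          (mem_duads.mpr (hL.2.1 e heL)) hne hdisj
        exact ⟨heL, s, mem_synthemes.mp hs, hds, hes⟩
    exact ⟨a, (hmem a).mpr rfl, fun e he => (hmem e).mp he⟩
end
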